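/- (Schur's bound) Let a_1, ..., a_n be positive integers with gcd equal to 1 and n ≥ 2, let m = min_i a_i and M = max_i a_i. Then the Frobenius number satisfies g(a) ≤ mM − m − M. -/
import Mathlib


/-- Every residue mod `N` is hit by a nonnegative combination of the `a i`
with total coefficient sum at most `N - 1`. -/
lemma key_residues (n : ℕ) (a : Fin n → ℤ) (N : ℕ) (hN : 0 < N)
    (y : Fin n → ℤ) (hy : ∑ i, a i * y i = 1) (r : ZMod N) :
    ∃ x : Fin n → ℕ, (∑ i, x i ≤ N - 1) ∧
      (((∑ i, a i * (x i : ℤ)) : ℤ) : ZMod N) = r := by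
  classical
  haveI : NeZero N := ⟨hN.ne'⟩
  -- the set of residues reachable with budget c
  set S : ℕ → Finset (ZMod N) := fun c =>
    Finset.image (fun x : Fin n → Fin (c+1) =>
      (((∑ i, a i * ((x i : ℕ) : ℤ)) : ℤ) : ZMod N))
      (Finset.univ.filter (fun x : Fin n → Fin (c+1) => ∑ i, (x i : ℕ) ≤ c)) with hS
  have hmem : ∀ c (r : ZMod N), r ∈ S c ↔ ∃ x : Fin n → ℕ,
      (∑ i, x i ≤ c) ∧ (((∑ i, a i * (x i : ℤ)) : ℤ) : ZMod N) = r := by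
    intro c r
    constructor
    · intro hr
      rw [hS] at hr
      simp only [Finset.mem_image, Finset.mem_filter, Finset.mem_univ, true_and] at hr
      obtain ⟨x, hx1, hx2⟩ := hr
      exact ⟨fun i => (x i : ℕ), hx1, hx2⟩
    · rintro ⟨x, hx1, hx2⟩
      rw [hS]
      simp only [Finset.mem_image, Finset.mem_filter, Finset.mem_univ, true_and]
      have hxc : ∀ i, x i < c + 1 := by
        intro i
        have : x i ≤ ∑ k, x k := Finset.single_le_sum (fun k _ => Nat.zero_le _) (Finset.mem_univ i)
        omega
      refine ⟨fun i => ⟨x i, hxc i⟩, by simpa using hx1, by simpa using hx2⟩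
  have h0 : ∀ c, (0 : ZMod N) ∈ S c := by
    intro c
    rw [hmem]
    exact ⟨0, by simp, by simp⟩
  have hmono : ∀ c, S c ⊆ S (c+1) := by
    intro c z hz
    rw [hmem] at hz ⊢
    obtain ⟨x, hx1, hx2⟩ := hz
    exact ⟨x, hx1.trans (Nat.le_succ c), hx2⟩
  have hstep : ∀ c (i : Fin n) (z : ZMod N), z ∈ S c → z + (a i : ZMod N) ∈ S (c+1) := by
    intro c i z hz
    rw [hmem] at hz ⊢
    obtain ⟨x, hx1, hx2⟩ := hz
    refine ⟨fun k => x k + if k = i then 1 else 0, ?_, ?_⟩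
    · rw [Finset.sum_add_distrib, Finset.sum_ite_eq' Finset.univ i (fun _ => 1)]
      simp only [Finset.mem_univ, if_true]
      omega
    · have h1 : (∑ k, a k * ((x k + if k = i then 1 else 0 : ℕ) : ℤ))
          = (∑ k, a k * (x k : ℤ)) + a i := by
        push_cast
        simp only [mul_add]
        rw [Finset.sum_add_distrib]
        congr 1
        simp [apply_ite, mul_one, mul_zero, Finset.sum_ite_eq']
      rw [h1, Int.cast_add, hx2]
  -- dichotomy: either S c is everything, or it grows strictly
  have hdich : ∀ c, S c = Finset.univ ∨ S c ⊂ S (c+1) := by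
    intro c
    by_cases heq : S (c+1) = S c
    · left
      -- S c is stable under adding each a i; build the subgroup H
      have hcl : ∀ (i : Fin n) (z : ZMod N), z ∈ S c → z + (a i : ZMod N) ∈ S c := by
        intro i z hz
        rw [← heq]
        exact hstep c i z hz
      set H : AddSubgroup (ZMod N) :=
        { carrier := {g : ZMod N | ∀ z ∈ S c, z + g ∈ S c}
          zero_mem' := by intro z hz; simpa using hz
          add_mem' := by
            intro g h hg hh z hz
            rw [← add_assoc]
            exact hh _ (hg _ hz)
          neg_mem' := by
            intro g hg z hz
            -- the map (+ g) : S c → S c is injective hence surjective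
            have hsurj := Finset.surj_on_of_inj_on_of_card_le
              (s := S c) (t := S c) (fun w _ => w + g)
              (fun w hw => hg w hw)
              (fun w1 w2 h1 h2 he => by simpa using he)
              le_rfl
            obtain ⟨w, hw, hwe⟩ := hsurj z hz
            have hwe' : z = w + g := hwe
            have : z + -g = w := by rw [hwe']; ring
            rw [this]; exact hw } with hH
      have hai : ∀ i : Fin n, ((a i : ℤ) : ZMod N) ∈ H := by
        intro i z hz
        exact hcl i z hz
      have h1H : (1 : ZMod N) ∈ H := by
        have : ((1 : ℤ) : ZMod N) ∈ H := by
          rw [← hy]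
          push_cast
          refine AddSubgroup.sum_mem H (fun i _ => ?_)
          have := AddSubgroup.zsmul_mem H (hai i) (y i)
          rwa [zsmul_eq_mul, mul_comm] at this
        simpa using this
      apply Finset.eq_univ_of_forall
      intro z
      have hzH : z ∈ H := by
        have := AddSubgroup.nsmul_mem H h1H (ZMod.val z)
        rwa [nsmul_eq_mul, mul_one, ZMod.natCast_rightInverse z] at this
      have := hzH 0 (h0 c)
      simpa using this
    · right
      exact Finset.ssubset_iff_subset_ne.mpr ⟨hmono c, fun h => heq h.symm⟩
  have hcard : ∀ c, S c = Finset.univ ∨ c + 1 ≤ (S c).card := by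
    intro c
    induction c with
    | zero =>
      right
      exact Finset.card_pos.mpr ⟨0, h0 0⟩
    | succ c ih =>
      rcases ih with h | h
      · left
        exact Finset.univ_subset_iff.mp (h ▸ hmono c)
      · rcases hdich c with h2 | h2
        · left
          exact Finset.univ_subset_iff.mp (h2 ▸ hmono c)
        · right
          have := Finset.card_lt_card h2
          omega
  have hfin : S (N-1) = Finset.univ := by
    rcases hcard (N-1) with h | h
    · exact h
    · have hNN : N - 1 + 1 = N := Nat.succ_pred_eq_of_pos hN
      rw [hNN] at h
      apply Finset.eq_univ_of_card
      have hle : (S (N-1)).card ≤ Fintype.card (ZMod N) := Finset.card_le_univ _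
      rw [ZMod.card N] at hle ⊢
      omega
  have : r ∈ S (N-1) := hfin ▸ Finset.mem_univ r
  rw [hmem] at this
  exact this


/-- Bezout for a finset of integers. -/
lemma finset_bezout {ι : Type*} [DecidableEq ι] (a : ι → ℤ) (s : Finset ι) :
    ∃ y : ι → ℤ, ∑ i ∈ s, a i * y i = s.gcd a := by
  classical
  induction s using Finset.induction_on with
  | empty => exact ⟨0, by simp⟩
  | @insert i s hi ih =>
    obtain ⟨y, hy⟩ := ih
    rw [Finset.gcd_insert]
    have hb := Int.gcd_eq_gcd_ab (a i) (s.gcd a)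
    refine ⟨fun k => if k = i then Int.gcdA (a i) (s.gcd a)
      else y k * Int.gcdB (a i) (s.gcd a), ?_⟩
    rw [Finset.sum_insert hi]
    have : ∑ k ∈ s, a k * (if k = i then Int.gcdA (a i) (s.gcd a)
        else y k * Int.gcdB (a i) (s.gcd a))
        = (∑ k ∈ s, a k * y k) * Int.gcdB (a i) (s.gcd a) := by
      rw [Finset.sum_mul]
      apply Finset.sum_congr rfl
      intro k hk
      rw [if_neg (by rintro rfl; exact hi hk)]
      ring
    rw [this, hy]
    have : GCDMonoid.gcd (a i) (s.gcd a) = (Int.gcd (a i) (s.gcd a) : ℤ) := rfl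
    simp only [if_pos]; rw [this, hb]

/-- Schur's bound: for positive integers `a₁,…,a_n` (`n ≥ 2`) with
gcd 1, minimum `m` and maximum `M`, the Frobenius number `g` satisfies
`g ≤ mM − m − M`. -/
theorem stmt_9 (n : ℕ) (hn : 2 ≤ n) (a : Fin n → ℤ) (ha : ∀ i, 0 < a i)
    (hgcd : Finset.univ.gcd a = 1)
    (M m : ℤ) (hM : IsGreatest (Set.range a) M) (hm : IsLeast (Set.range a) m)
    (g : ℤ)
    (hg : IsGreatest {b : ℤ |
      ¬ ∃ x : Fin n → ℤ, (∀ i, 0 ≤ x i) ∧ ∑ i, a i * x i = b} g) :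
    g ≤ m * M - m - M := by
  by_contra hcon
  push_neg at hcon
  have hgb : m * M - m - M + 1 ≤ g := hcon
  obtain ⟨j, hj⟩ := hm.1
  have hm0 : 0 < m := hj ▸ ha j
  obtain ⟨jM, hjM⟩ := hM.1
  have hmM : m ≤ M := hm.2 hM.1
  have hMi : ∀ i, a i ≤ M := fun i => hM.2 ⟨i, rfl⟩
  set N : ℕ := m.toNat with hNdef
  have hN : 0 < N := by omega
  have hNm : (N : ℤ) = m := Int.toNat_of_nonneg hm0.le
  -- Bezout
  obtain ⟨y, hy⟩ := finset_bezout a Finset.univ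
  rw [hgcd] at hy
  -- representation of the residue of g
  obtain ⟨x, hx1, hx2⟩ := key_residues n a N hN y hy ((g : ℤ) : ZMod N)
  set t : ℤ := ∑ i, a i * (x i : ℤ) with ht
  have ht0 : 0 ≤ t := Finset.sum_nonneg fun i _ =>
    mul_nonneg (ha i).le (Int.natCast_nonneg _)
  have htM : t ≤ ((N : ℤ) - 1) * M := by
    have h1 : t ≤ ∑ i, M * (x i : ℤ) := by
      apply Finset.sum_le_sum
      intro i _
      exact mul_le_mul_of_nonneg_right (hMi i) (Int.natCast_nonneg _)
    have h2 : ∑ i, M * (x i : ℤ) = M * ∑ i, (x i : ℤ) := by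
      rw [Finset.mul_sum]
    have h3 : (∑ i, (x i : ℤ)) ≤ (N : ℤ) - 1 := by
      have : ((∑ i, x i : ℕ) : ℤ) ≤ ((N - 1 : ℕ) : ℤ) := Int.ofNat_le.mpr hx1
      push_cast at this
      rw [Int.ofNat_sub hN] at this <;> omega
    calc t ≤ M * ∑ i, (x i : ℤ) := h2 ▸ h1
      _ ≤ M * ((N : ℤ) - 1) := by
          apply mul_le_mul_of_nonneg_left h3 (by linarith)
      _ = ((N : ℤ) - 1) * M := mul_comm _ _
  -- divisibility
  have hdvd : (N : ℤ) ∣ g - t := by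
    rw [← ZMod.intCast_zmod_eq_zero_iff_dvd]
    push_cast
    rw [hx2]
    ring
  obtain ⟨q, hq⟩ := hdvd
  have hq0 : 0 ≤ q := by
    have h1 : g - t ≥ m * M - m - M + 1 - ((N : ℤ) - 1) * M := by
      omega
    rw [hNm] at h1
    have h2 : g - t ≥ -m + 1 := by nlinarith
    rw [hq, hNm] at h2
    nlinarith
  -- build the representation
  have : ∃ x : Fin n → ℤ, (∀ i, 0 ≤ x i) ∧ ∑ i, a i * x i = g := by
    refine ⟨fun i => (x i : ℤ) + if i = j then q else 0, ?_, ?_⟩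
    · intro i
      by_cases h : i = j <;> simp [h] <;> positivity
    · have hsplit : ∑ i, a i * ((x i : ℤ) + if i = j then q else 0)
          = t + a j * q := by
        simp only [mul_add]
        rw [Finset.sum_add_distrib]
        congr 1
        rw [Finset.sum_congr rfl (fun i _ => by rw [mul_ite, mul_zero]),
          Finset.sum_ite_eq' Finset.univ j (fun i => a i * q)]
        simp
      rw [hsplit, hj]
      rw [hNm] at hq
      omega
  exact hg.1 this
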